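/- Let u : ℝ^n → [−1,1] be a Lipschitz continuous Q-minimizer of the energy E and let θ ∈ (−1, −1/2]. Define S(τ) := min{(τ+1)^p, 1}. Then there exists a constant C > 0, depending only on n, Q, p, θ, the constant C₀ in the potential bounds, and the Lipschitz constant of u, such that ∫_{B_r^+(x₀) ∩ {u ≤ θ}} S(u(x)) dx ≤ C r^{n−1} for every x₀ in the closure of ℝ^n_+ and every r ≥ 1. -/

import Mathlib

open MeasureTheory Set Metric

/-- The open half-space `{x : xₙ > 0}` of `ℝⁿ` (last coordinate positive). -/
def upperHalfSpace (n : ℕ) (hn : 0 < n) : Set (EuclideanSpace ℝ (Fin n)) :=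
  {x | 0 < x ⟨n - 1, Nat.sub_lt hn one_pos⟩}

/-- The hyperplane `{x : xₙ = 0}` of `ℝⁿ` (last coordinate zero). -/
def bottomHyperplane (n : ℕ) (hn : 0 < n) : Set (EuclideanSpace ℝ (Fin n)) :=
  {x | x ⟨n - 1, Nat.sub_lt hn one_pos⟩ = 0}

/-- The energy `E_Ω(u) = ∫_{Ω ∩ ℝⁿ₊} (|∇u|^p + F(u)) dx + ∫_{Ω ∩ {xₙ=0}} G(u) dH^{n-1}`. -/
noncomputable def energyE (n : ℕ) (hn : 0 < n) (p : ℝ) (F G : ℝ → ℝ)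
    (Ω : Set (EuclideanSpace ℝ (Fin n))) (u : EuclideanSpace ℝ (Fin n) → ℝ) : ℝ :=
  (∫ x in Ω ∩ upperHalfSpace n hn, (‖fderiv ℝ u x‖ ^ p + F (u x))) +
  (∫ x in Ω ∩ bottomHyperplane n hn, G (u x) ∂(μH[(n - 1 : ℕ)]))

/-- `u` is a `Q`-minimizer of the energy: for every bounded open `Ω` and every Lipschitz
perturbation `φ` supported in `Ω` with `u + φ` taking values in `[-1,1]`,
`E_Ω(u) ≤ Q · E_Ω(u + φ)`. -/
def IsQMinimizer (n : ℕ) (hn : 0 < n) (p Q : ℝ) (F G : ℝ → ℝ)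
    (u : EuclideanSpace ℝ (Fin n) → ℝ) : Prop :=
  ∀ Ω : Set (EuclideanSpace ℝ (Fin n)), IsOpen Ω → Bornology.IsBounded Ω →
    ∀ φ : EuclideanSpace ℝ (Fin n) → ℝ, (∃ K, LipschitzWith K φ) →
      Function.support φ ⊆ Ω → (∀ x, u x + φ x ∈ Icc (-1 : ℝ) 1) →
      energyE n hn p F G Ω u ≤ Q * energyE n hn p F G Ω (fun x => u x + φ x)

/-- The double-well potential bounds: `max(F τ, G τ) ≤ C₀ (1-τ²)^p` and
`F τ ≥ (1-τ²)^p / C₀` for `τ ∈ [-1,1]`. -/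
def PotentialBounds (p C₀ : ℝ) (F G : ℝ → ℝ) : Prop :=
  ∀ τ ∈ Icc (-1 : ℝ) 1,
    max (F τ) (G τ) ≤ C₀ * (1 - τ ^ 2) ^ p ∧ (1 - τ ^ 2) ^ p / C₀ ≤ F τ

open scoped NNReal ENNReal

set_option maxHeartbeats 1000000
set_option synthInstance.maxHeartbeats 400000

section AuxLemmas

lemma aux_intOn {α : Type*} [MeasurableSpace α] {μ : Measure α} {S : Set α}
    (hfin : μ S ≠ ⊤) {g : α → ℝ} (hg : Measurable g) {M : ℝ}
    (hS : MeasurableSet S) (h0 : ∀ x ∈ S, 0 ≤ g x) (hM : ∀ x ∈ S, g x ≤ M) :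
    IntegrableOn g S μ := by
  haveI : IsFiniteMeasure (μ.restrict S) :=
    ⟨by rwa [Measure.restrict_apply_univ, lt_top_iff_ne_top]⟩
  refine ⟨hg.aestronglyMeasurable, HasFiniteIntegral.of_bounded (C := M) ?_⟩
  refine ae_restrict_of_forall_mem hS fun x hx => ?_
  rw [Real.norm_eq_abs, abs_of_nonneg (h0 x hx)]
  exact hM x hx

lemma aux_integral_le {α : Type*} [MeasurableSpace α] (μ : Measure α) (S D : Set α)
    (hS : MeasurableSet S) (hD : MeasurableSet D) (hfin : μ S ≠ ⊤)
    (g : α → ℝ) (hg : Measurable g) (M : ℝ) (_hM0 : 0 ≤ M)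
    (h0 : ∀ x ∈ S, 0 ≤ g x) (hM : ∀ x ∈ S, g x ≤ M)
    (hz : ∀ x ∈ S ∩ D, g x = 0) :
    ∫ x in S, g x ∂μ ≤ M * (μ (S \ D)).toReal := by
  have hint : IntegrableOn g S μ := aux_intOn hfin hg hS h0 hM
  have hsplit := integral_inter_add_diff (μ := μ) (f := g) (s := S) (t := D) hD hint
  have h1 : ∫ x in S ∩ D, g x ∂μ = 0 := by
    rw [setIntegral_congr_fun (hS.inter hD) (fun x hx => hz x hx)]
    simp
  have h2 : ∫ x in S \ D, g x ∂μ ≤ M * (μ (S \ D)).toReal := by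
    have hfin' : μ (S \ D) < ⊤ := (measure_mono diff_subset).trans_lt hfin.lt_top
    calc ∫ x in S \ D, g x ∂μ ≤ ∫ _ in S \ D, M ∂μ :=
          setIntegral_mono_on (hint.mono_set diff_subset)
            (integrableOn_const hfin'.ne) (hS.diff hD) (fun x hx => hM x hx.1)
      _ = M * (μ (S \ D)).toReal := by rw [setIntegral_const, smul_eq_mul, mul_comm]; rfl
  linarith

lemma aux_coord_le {n : ℕ} (x y : EuclideanSpace ℝ (Fin n)) (j : Fin n) :
    dist (x j) (y j) ≤ dist x y := by
  rw [EuclideanSpace.dist_eq]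
  rw [show dist (x j) (y j) = Real.sqrt (dist (x j) (y j) ^ 2) from
    (Real.sqrt_sq dist_nonneg).symm]
  exact Real.sqrt_le_sqrt
    (Finset.single_le_sum (fun i _ => sq_nonneg (dist (x i) (y i))) (Finset.mem_univ j))

/-- The embedding of `ℝ^m` (sup metric) into `EuclideanSpace ℝ (Fin n)`. -/
noncomputable def auxEmb (n m : ℕ) (y : Fin m → ℝ) : EuclideanSpace ℝ (Fin n) :=
  WithLp.toLp 2 (fun j => if h : (j : ℕ) < m then y ⟨j, h⟩ else 0)

lemma aux_hyper (n : ℕ) (hn : 0 < n) (x₀ : EuclideanSpace ℝ (Fin n)) (R : ℝ) (hR : 0 ≤ R) :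
    μH[(n - 1 : ℕ)] (ball x₀ R ∩ bottomHyperplane n hn) ≤
      ENNReal.ofReal ((Real.sqrt n * (2 * R)) ^ (n - 1)) := by
  set m := n - 1 with hm
  set K : ℝ≥0 := NNReal.sqrt (n : ℝ≥0) with hK
  have hKcoe : (K : ℝ) = Real.sqrt n := by
    rw [hK, Real.coe_sqrt]; norm_num
  have hlip : LipschitzWith K (auxEmb n m) := by
    apply LipschitzWith.of_dist_le_mul
    intro y z
    rw [EuclideanSpace.dist_eq, hKcoe]
    have hb : ∀ j : Fin n, dist (auxEmb n m y j) (auxEmb n m z j) ^ 2 ≤ dist y z ^ 2 := by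
      intro j
      unfold auxEmb
      simp only [WithLp.ofLp_toLp]
      by_cases h : (j : ℕ) < m
      · rw [dif_pos h, dif_pos h]
        exact pow_le_pow_left₀ dist_nonneg (dist_le_pi_dist y z ⟨j, h⟩) 2
      · rw [dif_neg h, dif_neg h]
        simpa using sq_nonneg (dist y z)
    calc Real.sqrt (∑ j, dist (auxEmb n m y j) (auxEmb n m z j) ^ 2)
        ≤ Real.sqrt (∑ _j : Fin n, dist y z ^ 2) :=
          Real.sqrt_le_sqrt (Finset.sum_le_sum fun j _ => hb j)
      _ = Real.sqrt n * dist y z := by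
          rw [Finset.sum_const, Finset.card_univ, Fintype.card_fin, nsmul_eq_mul,
            Real.sqrt_mul (by positivity) _, Real.sqrt_sq dist_nonneg]
  set c : Fin m → ℝ := fun i => x₀ (Fin.castLE (Nat.sub_le n 1) i) with hc
  have hsub : ball x₀ R ∩ bottomHyperplane n hn ⊆ auxEmb n m '' (closedBall c R) := by
    rintro x ⟨hx1, hx2⟩
    refine ⟨fun i => x (Fin.castLE (Nat.sub_le n 1) i), ?_, ?_⟩
    · rw [mem_closedBall, dist_pi_le_iff hR]
      intro i
      calc dist (x (Fin.castLE (Nat.sub_le n 1) i)) (c i) ≤ dist x x₀ :=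
            aux_coord_le x x₀ _
        _ ≤ R := le_of_lt (mem_ball.mp hx1)
    · ext j
      unfold auxEmb
      simp only [WithLp.ofLp_toLp]
      by_cases h : (j : ℕ) < m
      · rw [dif_pos h]
        rfl
      · rw [dif_neg h]
        have hjlt := j.isLt
        have hj : j = (⟨n - 1, Nat.sub_lt hn one_pos⟩ : Fin n) := Fin.ext (by simp; omega)
        rw [hj]
        exact hx2.symm
  have hμ : (μH[(m : ℕ)] : Measure (Fin m → ℝ)) = volume := by
    have h := hausdorffMeasure_pi_real (ι := Fin m)
    rwa [Fintype.card_fin] at h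
  calc μH[(m : ℕ)] (ball x₀ R ∩ bottomHyperplane n hn)
      ≤ μH[(m : ℕ)] (auxEmb n m '' closedBall c R) := measure_mono hsub
    _ ≤ (K : ℝ≥0∞) ^ ((m : ℕ) : ℝ) * μH[(m : ℕ)] (closedBall c R) :=
        hlip.hausdorffMeasure_image_le (by positivity) _
    _ = (K : ℝ≥0∞) ^ (m : ℕ) * volume (closedBall c R) := by
        rw [ENNReal.rpow_natCast, hμ]
    _ = ENNReal.ofReal ((Real.sqrt n) ^ m) * ENNReal.ofReal ((2 * R) ^ m) := by
        rw [Real.volume_pi_closedBall c hR, Fintype.card_fin]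
        congr 1
        rw [ENNReal.ofReal_pow (Real.sqrt_nonneg _), ← hKcoe, ENNReal.ofReal_coe_nnreal]
    _ = ENNReal.ofReal ((Real.sqrt n * (2 * R)) ^ m) := by
        rw [← ENNReal.ofReal_mul (by positivity)]
        congr 1
        ring

end AuxLemmas

/-- The area-term bound: for a Lipschitz `Q`-minimizer `u` and
`θ ∈ (-1,-1/2]`, with `S(τ) = min{(τ+1)^p, 1}`, there is `C > 0`, depending only on
`n, Q, p, θ, C₀` and the Lipschitz constant of `u`, such that
`∫_{B⁺_r(x₀) ∩ {u ≤ θ}} S(u) dx ≤ C r^{n-1}` for all `x₀ ∈ closure ℝⁿ₊` and `r ≥ 1`. -/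
theorem statement15 (n : ℕ) (hn : 2 ≤ n) (p : ℝ) (hp : 1 < p) (Q : ℝ) (hQ : 1 ≤ Q)
    (C₀ : ℝ) (hC₀ : 1 ≤ C₀) (L : NNReal) (θ : ℝ) (hθ : θ ∈ Ioc (-1 : ℝ) (-1/2)) :
    ∃ C : ℝ, 0 < C ∧
      ∀ F G : ℝ → ℝ, Continuous F → Continuous G →
        (∀ τ, 0 ≤ F τ) → (∀ τ, 0 ≤ G τ) → PotentialBounds p C₀ F G →
        ∀ u : EuclideanSpace ℝ (Fin n) → ℝ, LipschitzWith L u →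
          (∀ x, u x ∈ Icc (-1 : ℝ) 1) →
          IsQMinimizer n (by omega) p Q F G u →
          ∀ x₀ ∈ closure (upperHalfSpace n (by omega)), ∀ r : ℝ, 1 ≤ r →
            (∫ x in ball x₀ r ∩ upperHalfSpace n (by omega) ∩ {x | u x ≤ θ},
                min ((u x + 1) ^ p) 1)
              ≤ C * r ^ (n - 1) := by
  have hn' : 0 < n := by omega
  have hp0 : (0:ℝ) < p := by linarith
  have hC₀0 : (0:ℝ) ≤ C₀ := by linarith
  have hQ0 : (0:ℝ) ≤ Q := by linarith
  set M₁ : ℝ := ((L + (2 + L) : ℝ≥0) : ℝ) ^ p + C₀ with hM₁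
  set c₁ : ℝ := (volume (ball (0 : EuclideanSpace ℝ (Fin n)) 1)).toReal with hc₁
  set CA : ℝ := 2 * n * 2 ^ (n - 1) * c₁ with hCA
  set CH : ℝ := (Real.sqrt n * 4) ^ (n - 1) with hCH
  have hM₁0 : 0 ≤ M₁ := by
    rw [hM₁]
    exact add_nonneg (Real.rpow_nonneg (NNReal.coe_nonneg _) p) hC₀0
  have hc₁0 : 0 ≤ c₁ := ENNReal.toReal_nonneg
  have hCA0 : 0 ≤ CA := by
    rw [hCA]
    have : (0:ℝ) ≤ (n : ℝ) := Nat.cast_nonneg n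
    positivity
  have hCH0 : 0 ≤ CH := by
    rw [hCH]
    positivity
  have hcoef0 : 0 ≤ C₀ * Q * (M₁ * CA + C₀ * CH) :=
    mul_nonneg (mul_nonneg hC₀0 hQ0)
      (add_nonneg (mul_nonneg hM₁0 hCA0) (mul_nonneg hC₀0 hCH0))
  refine ⟨1 + C₀ * Q * (M₁ * CA + C₀ * CH), by linarith, ?_⟩
  intro F G hFc hGc hF0 hG0 hPB u hu hu1 hmin x₀ _ r hr
  have hucont : Continuous u := hu.continuous
  have hproj : ∀ i : Fin n, Continuous fun x : EuclideanSpace ℝ (Fin n) => x i :=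
    fun i => (EuclideanSpace.proj i).continuous
  have hHopen : IsOpen (upperHalfSpace n hn') :=
    isOpen_lt continuous_const (hproj _)
  have hHmeas : MeasurableSet (upperHalfSpace n hn') := hHopen.measurableSet
  have hTmeas : MeasurableSet (bottomHyperplane n hn') := by
    have h : bottomHyperplane n hn' =
        (fun x : EuclideanSpace ℝ (Fin n) => x ⟨n - 1, Nat.sub_lt hn' one_pos⟩) ⁻¹' {0} := by
      ext x; simp [bottomHyperplane]
    rw [h]
    exact (hproj _).measurable (measurableSet_singleton 0)
  -- potential facts
  have hFle : ∀ t, t ∈ Icc (-1:ℝ) 1 → F t ≤ C₀ := by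
    intro t ht
    have h1 := (hPB t ht).1
    have h2 : ((1:ℝ) - t^2) ^ p ≤ 1 :=
      Real.rpow_le_one (by nlinarith [ht.1, ht.2]) (by nlinarith [ht.1, ht.2]) hp0.le
    have h3 := le_max_left (F t) (G t)
    nlinarith
  have hGle : ∀ t, t ∈ Icc (-1:ℝ) 1 → G t ≤ C₀ := by
    intro t ht
    have h1 := (hPB t ht).1
    have h2 : ((1:ℝ) - t^2) ^ p ≤ 1 :=
      Real.rpow_le_one (by nlinarith [ht.1, ht.2]) (by nlinarith [ht.1, ht.2]) hp0.le
    have h3 := le_max_right (F t) (G t)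
    nlinarith
  have hpow1 : ((1:ℝ) - 1^2) ^ p = 0 := by
    have h : ((1:ℝ) - 1^2) = 0 := by norm_num
    rw [h, Real.zero_rpow hp0.ne']
  have hF1 : F 1 = 0 := by
    have h1 := (hPB 1 (by norm_num : (1:ℝ) ∈ Icc (-1:ℝ) 1)).1
    rw [hpow1] at h1
    have h3 := le_max_left (F 1) (G 1)
    nlinarith [hF0 1]
  have hG1 : G 1 = 0 := by
    have h1 := (hPB 1 (by norm_num : (1:ℝ) ∈ Icc (-1:ℝ) 1)).1
    rw [hpow1] at h1
    have h3 := le_max_right (F 1) (G 1)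
    nlinarith [hG0 1]
  -- the cutoff and the competitor
  set η : EuclideanSpace ℝ (Fin n) → ℝ := fun x => max 0 (min 1 (r - dist x x₀)) with hηd
  have hη0 : ∀ x, 0 ≤ η x := fun x => le_max_left _ _
  have hη1 : ∀ x, η x ≤ 1 := fun x => max_le zero_le_one (min_le_left _ _)
  have hηlip : LipschitzWith 1 η := by
    have h1 : LipschitzWith 1 (fun x : EuclideanSpace ℝ (Fin n) => r - dist x x₀) := by
      simpa using (LipschitzWith.const (α := EuclideanSpace ℝ (Fin n)) r).sub
        (LipschitzWith.dist_left x₀)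
    exact (h1.const_min 1).const_max 0
  set φ : EuclideanSpace ℝ (Fin n) → ℝ := fun x => η x * (1 - u x) with hφd
  have hφlip : LipschitzWith (2 + L) φ := by
    apply LipschitzWith.of_dist_le_mul
    intro x y
    have hηxy : |η x - η y| ≤ dist x y := by
      have := hηlip.dist_le_mul x y
      rwa [Real.dist_eq, NNReal.coe_one, one_mul] at this
    have huxy : |u y - u x| ≤ (L : ℝ) * dist x y := by
      have := hu.dist_le_mul y x
      rwa [Real.dist_eq, dist_comm y x] at this
    have hux := hu1 x
    have h1ux : |1 - u x| ≤ 2 := abs_le.2 ⟨by linarith [hux.2], by linarith [hux.1]⟩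
    have hηyabs : |η y| ≤ 1 := abs_le.2 ⟨by linarith [hη0 y], hη1 y⟩
    have e : η x * (1 - u x) - η y * (1 - u y)
        = (η x - η y) * (1 - u x) + η y * (u y - u x) := by ring
    rw [Real.dist_eq]
    simp only [hφd]
    calc |η x * (1 - u x) - η y * (1 - u y)|
        ≤ |(η x - η y) * (1 - u x)| + |η y * (u y - u x)| := by rw [e]; exact abs_add_le _ _
      _ = |η x - η y| * |1 - u x| + |η y| * |u y - u x| := by rw [abs_mul, abs_mul]
      _ ≤ dist x y * 2 + 1 * ((L : ℝ) * dist x y) :=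
          add_le_add (mul_le_mul hηxy h1ux (abs_nonneg _) dist_nonneg)
            (mul_le_mul hηyabs huxy (abs_nonneg _) zero_le_one)
      _ = ((2 + L : ℝ≥0) : ℝ) * dist x y := by push_cast; ring
  have hrange : ∀ x, u x + φ x ∈ Icc (-1:ℝ) 1 := by
    intro x
    have h1 := hu1 x
    have h2 := hη0 x
    have h3 := hη1 x
    constructor
    · simp only [hφd]
      nlinarith [h1.1, h1.2]
    · simp only [hφd]
      nlinarith [h1.1, h1.2]
  have hvlip : LipschitzWith (L + (2 + L)) (fun x => u x + φ x) := hu.add hφlip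
  have hvcont : Continuous (fun x => u x + φ x) := hvlip.continuous
  have hveq1 : ∀ y ∈ ball x₀ (r - 1), u y + φ y = 1 := by
    intro y hy
    have hd : dist y x₀ < r - 1 := mem_ball.mp hy
    have hη' : η y = 1 := by
      simp only [hηd]
      rw [min_eq_left (by linarith), max_eq_right (by linarith : (0:ℝ) ≤ 1)]
    simp only [hφd, hη']
    ring
  have hsupp : Function.support φ ⊆ ball x₀ (r + 1) := by
    intro x hx
    rw [Function.mem_support] at hx
    rw [mem_ball]
    by_contra hcon
    push_neg at hcon
    apply hx
    have hηz : η x = 0 := by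
      simp only [hηd]
      rw [max_eq_left]
      exact (min_le_right _ _).trans (by linarith)
    simp only [hφd, hηz, zero_mul]
  -- measurability and integrability
  have hSHmeas : MeasurableSet (ball x₀ (r+1) ∩ upperHalfSpace n hn') :=
    measurableSet_ball.inter hHmeas
  have hSTmeas : MeasurableSet (ball x₀ (r+1) ∩ bottomHyperplane n hn') :=
    measurableSet_ball.inter hTmeas
  have hSHfin : volume (ball x₀ (r+1) ∩ upperHalfSpace n hn') ≠ ⊤ :=
    ((measure_mono inter_subset_left).trans_lt measure_ball_lt_top).ne
  have hAmeas : MeasurableSet (ball x₀ r ∩ upperHalfSpace n hn' ∩ {x | u x ≤ θ}) :=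
    (measurableSet_ball.inter hHmeas).inter
      (measurableSet_le hucont.measurable measurable_const)
  have hAfin : volume (ball x₀ r ∩ upperHalfSpace n hn' ∩ {x | u x ≤ θ}) ≠ ⊤ :=
    ((measure_mono (inter_subset_left.trans inter_subset_left)).trans_lt
      measure_ball_lt_top).ne
  have hmeas_min : Measurable fun x : EuclideanSpace ℝ (Fin n) => min ((u x + 1) ^ p) 1 :=
    (((hucont.add continuous_const).rpow_const (fun x => Or.inr hp0.le)).min
      continuous_const).measurable
  have hmeas_Fu : Measurable fun x : EuclideanSpace ℝ (Fin n) => C₀ * F (u x) :=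
    (continuous_const.mul (hFc.comp hucont)).measurable
  have hstep1 : ∀ x ∈ ball x₀ r ∩ upperHalfSpace n hn' ∩ {x | u x ≤ θ},
      min ((u x + 1) ^ p) 1 ≤ C₀ * F (u x) := by
    intro x hx
    have hxθ : u x ≤ θ := hx.2
    have h1 := (hu1 x).1
    have hθ2 := hθ.2
    have hb : u x + 1 ≤ 1 - u x ^ 2 := by nlinarith
    have h2 := (hPB (u x) (hu1 x)).2
    rw [div_le_iff₀ (by linarith : (0:ℝ) < C₀)] at h2
    calc min ((u x + 1) ^ p) 1 ≤ (u x + 1) ^ p := min_le_left _ _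
      _ ≤ (1 - u x ^ 2) ^ p := Real.rpow_le_rpow (by linarith) hb hp0.le
      _ ≤ C₀ * F (u x) := by nlinarith
  have hintA1 : IntegrableOn (fun x => min ((u x + 1) ^ p) 1)
      (ball x₀ r ∩ upperHalfSpace n hn' ∩ {x | u x ≤ θ}) volume :=
    aux_intOn hAfin hmeas_min hAmeas
      (fun x _ => le_min (Real.rpow_nonneg (by linarith [(hu1 x).1]) p) zero_le_one)
      (fun x _ => min_le_right _ _)
  have hFubd1 : ∀ x : EuclideanSpace ℝ (Fin n), 0 ≤ C₀ * F (u x) :=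
    fun x => mul_nonneg hC₀0 (hF0 _)
  have hFubd2 : ∀ x : EuclideanSpace ℝ (Fin n), C₀ * F (u x) ≤ C₀ * C₀ :=
    fun x => mul_le_mul_of_nonneg_left (hFle _ (hu1 x)) hC₀0
  have hintA2 : IntegrableOn (fun x => C₀ * F (u x))
      (ball x₀ r ∩ upperHalfSpace n hn' ∩ {x | u x ≤ θ}) volume :=
    aux_intOn hAfin hmeas_Fu hAmeas (fun x _ => hFubd1 x) (fun x _ => hFubd2 x)
  have hintSH2 : IntegrableOn (fun x => C₀ * F (u x))
      (ball x₀ (r+1) ∩ upperHalfSpace n hn') volume :=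
    aux_intOn hSHfin hmeas_Fu hSHmeas (fun x _ => hFubd1 x) (fun x _ => hFubd2 x)
  have hmeas_gu : Measurable fun x : EuclideanSpace ℝ (Fin n) =>
      ‖fderiv ℝ u x‖ ^ p + F (u x) := by
    apply Measurable.add
    · exact (Real.continuous_rpow_const hp0.le).measurable.comp
        (measurable_fderiv ℝ u).norm
    · exact (hFc.comp hucont).measurable
  have hintSH3 : IntegrableOn (fun x => F (u x))
      (ball x₀ (r+1) ∩ upperHalfSpace n hn') volume :=
    aux_intOn hSHfin (hFc.comp hucont).measurable hSHmeas
      (fun x _ => hF0 _) (fun x _ => hFle _ (hu1 x))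
  have hintSH4 : IntegrableOn (fun x => ‖fderiv ℝ u x‖ ^ p + F (u x))
      (ball x₀ (r+1) ∩ upperHalfSpace n hn') volume :=
    aux_intOn hSHfin hmeas_gu hSHmeas
      (fun x _ => add_nonneg (Real.rpow_nonneg (norm_nonneg _) p) (hF0 _))
      (fun x _ => add_le_add
        (Real.rpow_le_rpow (norm_nonneg _) (norm_fderiv_le_of_lipschitz ℝ hu) hp0.le)
        (hFle _ (hu1 x)))
  -- lower bound of the energy of u
  have hEu : (∫ x in ball x₀ (r+1) ∩ upperHalfSpace n hn', F (u x))
      ≤ energyE n hn' p F G (ball x₀ (r+1)) u := by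
    have h1 : (∫ x in ball x₀ (r+1) ∩ upperHalfSpace n hn', F (u x))
        ≤ ∫ x in ball x₀ (r+1) ∩ upperHalfSpace n hn', (‖fderiv ℝ u x‖ ^ p + F (u x)) :=
      setIntegral_mono_on hintSH3 hintSH4 hSHmeas
        (fun x _ => le_add_of_nonneg_left (Real.rpow_nonneg (norm_nonneg _) p))
    have h2 : (0:ℝ) ≤ ∫ x in ball x₀ (r+1) ∩ bottomHyperplane n hn',
        G (u x) ∂(μH[(n - 1 : ℕ)]) := integral_nonneg fun x => hG0 _
    have he : energyE n hn' p F G (ball x₀ (r+1)) u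
        = (∫ x in ball x₀ (r+1) ∩ upperHalfSpace n hn', (‖fderiv ℝ u x‖ ^ p + F (u x)))
          + ∫ x in ball x₀ (r+1) ∩ bottomHyperplane n hn', G (u x) ∂(μH[(n - 1 : ℕ)]) := rfl
    rw [he]
    linarith
  -- minimality
  have hminapp : energyE n hn' p F G (ball x₀ (r+1)) u
      ≤ Q * energyE n hn' p F G (ball x₀ (r+1)) (fun x => u x + φ x) :=
    hmin (ball x₀ (r+1)) isOpen_ball isBounded_ball φ ⟨2 + L, hφlip⟩ hsupp hrange
  -- the annulus volume bound
  haveI hNT : Nontrivial (EuclideanSpace ℝ (Fin n)) := by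
    have h : 0 < Module.finrank ℝ (EuclideanSpace ℝ (Fin n)) := by
      rw [finrank_euclideanSpace_fin]; omega
    exact Module.nontrivial_of_finrank_pos h
  have hζ : (volume ((ball x₀ (r+1) ∩ upperHalfSpace n hn') \ ball x₀ (r-1))).toReal
      ≤ CA * r ^ (n-1) := by
    have hsub2 : (ball x₀ (r+1) ∩ upperHalfSpace n hn') \ ball x₀ (r-1)
        ⊆ ball x₀ (r+1) \ ball x₀ (r-1) := diff_subset_diff_left inter_subset_left
    have hfin2 : volume (ball x₀ (r+1) \ ball x₀ (r-1)) ≠ ⊤ :=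
      ((measure_mono diff_subset).trans_lt measure_ball_lt_top).ne
    have h1 : (volume ((ball x₀ (r+1) ∩ upperHalfSpace n hn') \ ball x₀ (r-1))).toReal
        ≤ (volume (ball x₀ (r+1) \ ball x₀ (r-1))).toReal :=
      ENNReal.toReal_mono hfin2 (measure_mono hsub2)
    refine h1.trans ?_
    have hge0 : (0:ℝ) ≤ (r+1)^n - (r-1)^n :=
      sub_nonneg.2 (pow_le_pow_left₀ (by linarith) (by linarith) n)
    have hdiff : volume (ball x₀ (r+1) \ ball x₀ (r-1))
        = ENNReal.ofReal ((r+1)^n - (r-1)^n)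
          * volume (ball (0:EuclideanSpace ℝ (Fin n)) 1) := by
      rw [measure_diff (ball_subset_ball (by linarith))
          measurableSet_ball.nullMeasurableSet measure_ball_lt_top.ne,
        Measure.addHaar_ball _ _ (by linarith : (0:ℝ) ≤ r+1),
        Measure.addHaar_ball _ _ (by linarith : (0:ℝ) ≤ r-1),
        finrank_euclideanSpace_fin,
        ← ENNReal.sub_mul (fun _ _ => measure_ball_lt_top.ne),
        ← ENNReal.ofReal_sub _ (pow_nonneg (by linarith) n)]
    rw [hdiff, ENNReal.toReal_mul, ENNReal.toReal_ofReal hge0, ← hc₁]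
    have hgeom : (r+1)^n - (r-1)^n ≤ 2 * n * (2*r) ^ (n-1) := by
      have hg := geom_sum₂_mul (r+1) (r-1) n
      rw [show r + 1 - (r - 1) = 2 from by ring] at hg
      have hb : ∀ i ∈ Finset.range n, (r+1)^i * (r-1)^(n-1-i) ≤ (2*r)^(n-1) := by
        intro i hi
        have hi' : i + (n-1-i) = n - 1 := by
          have := Finset.mem_range.mp hi; omega
        calc (r+1)^i * (r-1)^(n-1-i) ≤ (2*r)^i * (2*r)^(n-1-i) :=
            mul_le_mul (pow_le_pow_left₀ (by linarith) (by linarith) i)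
              (pow_le_pow_left₀ (by linarith) (by linarith) _)
              (pow_nonneg (by linarith) _) (by positivity)
          _ = (2*r)^(n-1) := by rw [← pow_add, hi']
      have hsum : (∑ i ∈ Finset.range n, (r+1)^i * (r-1)^(n-1-i)) ≤ n * (2*r)^(n-1) := by
        calc (∑ i ∈ Finset.range n, (r+1)^i * (r-1)^(n-1-i))
            ≤ ∑ _i ∈ Finset.range n, (2*r)^(n-1) := Finset.sum_le_sum hb
          _ = n * (2*r)^(n-1) := by
              rw [Finset.sum_const, Finset.card_range, nsmul_eq_mul]
      linarith
    calc ((r+1)^n - (r-1)^n) * c₁ ≤ (2 * n * (2*r) ^ (n-1)) * c₁ :=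
        mul_le_mul_of_nonneg_right hgeom hc₁0
      _ = CA * r ^ (n-1) := by rw [hCA, mul_pow]; ring
  -- bound on the volume part of the energy of the competitor
  have hmeas_gv : Measurable fun x : EuclideanSpace ℝ (Fin n) =>
      ‖fderiv ℝ (fun y => u y + φ y) x‖ ^ p + F (u x + φ x) := by
    apply Measurable.add
    · exact (Real.continuous_rpow_const hp0.le).measurable.comp
        (measurable_fderiv ℝ _).norm
    · exact (hFc.comp hvcont).measurable
  have hI1 : (∫ x in ball x₀ (r+1) ∩ upperHalfSpace n hn',
      (‖fderiv ℝ (fun y => u y + φ y) x‖ ^ p + F (u x + φ x)))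
      ≤ M₁ * (CA * r ^ (n-1)) := by
    have hz : ∀ x ∈ (ball x₀ (r+1) ∩ upperHalfSpace n hn') ∩ ball x₀ (r-1),
        ‖fderiv ℝ (fun y => u y + φ y) x‖ ^ p + F (u x + φ x) = 0 := by
      intro x hx
      have hev : (fun y => u y + φ y) =ᶠ[nhds x] fun _ => (1:ℝ) :=
        Filter.eventually_of_mem (isOpen_ball.mem_nhds hx.2) hveq1
      have h2 : fderiv ℝ (fun y => u y + φ y) x = 0 := by
        rw [Filter.EventuallyEq.fderiv_eq hev]
        exact fderiv_const_apply 1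
      rw [h2, hveq1 x hx.2, hF1]
      simp [Real.zero_rpow hp0.ne']
    have hb := aux_integral_le volume (ball x₀ (r+1) ∩ upperHalfSpace n hn')
      (ball x₀ (r-1)) hSHmeas measurableSet_ball hSHfin _ hmeas_gv M₁ hM₁0
      (fun x _ => add_nonneg (Real.rpow_nonneg (norm_nonneg _) p) (hF0 _))
      (fun x _ => by
        rw [hM₁]
        exact add_le_add
          (Real.rpow_le_rpow (norm_nonneg _) (norm_fderiv_le_of_lipschitz ℝ hvlip) hp0.le)
          (hFle _ (hrange x)))
      hz
    exact hb.trans (mul_le_mul_of_nonneg_left hζ hM₁0)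
  -- bound on the boundary part of the energy of the competitor
  have hμST := aux_hyper n hn' x₀ (r+1) (by linarith : (0:ℝ) ≤ r+1)
  have hSTfin : μH[(n - 1 : ℕ)] (ball x₀ (r+1) ∩ bottomHyperplane n hn') ≠ ⊤ :=
    (hμST.trans_lt ENNReal.ofReal_lt_top).ne
  have hI2 : (∫ x in ball x₀ (r+1) ∩ bottomHyperplane n hn',
      G (u x + φ x) ∂(μH[(n - 1 : ℕ)])) ≤ C₀ * (CH * r ^ (n-1)) := by
    have hb := aux_integral_le (μH[(n - 1 : ℕ)])
      (ball x₀ (r+1) ∩ bottomHyperplane n hn') ∅ hSTmeas MeasurableSet.empty hSTfin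
      (fun x => G (u x + φ x)) ((hGc.comp hvcont).measurable) C₀ hC₀0
      (fun x _ => hG0 _) (fun x _ => hGle _ (hrange x))
      (fun x hx => absurd hx.2 (notMem_empty x))
    rw [diff_empty] at hb
    refine hb.trans (mul_le_mul_of_nonneg_left ?_ hC₀0)
    have h1 : (μH[(n - 1 : ℕ)] (ball x₀ (r+1) ∩ bottomHyperplane n hn')).toReal
        ≤ (Real.sqrt n * (2*(r+1))) ^ (n-1) :=
      ENNReal.toReal_le_of_le_ofReal (by positivity) hμST
    refine h1.trans ?_
    have hs0 : (0:ℝ) ≤ Real.sqrt (n:ℝ) := Real.sqrt_nonneg _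
    have hsr : (0:ℝ) ≤ Real.sqrt (n:ℝ) * (2*r - 2) :=
      mul_nonneg hs0 (by linarith)
    calc (Real.sqrt n * (2*(r+1))) ^ (n-1) ≤ (Real.sqrt n * 4 * r) ^ (n-1) :=
        pow_le_pow_left₀ (by positivity) (by nlinarith) _
      _ = CH * r ^ (n-1) := by rw [hCH, mul_pow]
  -- assembling the competitor energy bound
  have hEv : energyE n hn' p F G (ball x₀ (r+1)) (fun x => u x + φ x)
      ≤ (M₁ * CA + C₀ * CH) * r ^ (n-1) := by
    have he : energyE n hn' p F G (ball x₀ (r+1)) (fun x => u x + φ x)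
        = (∫ x in ball x₀ (r+1) ∩ upperHalfSpace n hn',
            (‖fderiv ℝ (fun y => u y + φ y) x‖ ^ p + F (u x + φ x)))
          + ∫ x in ball x₀ (r+1) ∩ bottomHyperplane n hn',
            G (u x + φ x) ∂(μH[(n - 1 : ℕ)]) := rfl
    rw [he]
    calc (∫ x in ball x₀ (r+1) ∩ upperHalfSpace n hn',
            (‖fderiv ℝ (fun y => u y + φ y) x‖ ^ p + F (u x + φ x)))
          + (∫ x in ball x₀ (r+1) ∩ bottomHyperplane n hn',
            G (u x + φ x) ∂(μH[(n - 1 : ℕ)]))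
        ≤ M₁ * (CA * r ^ (n-1)) + C₀ * (CH * r ^ (n-1)) := add_le_add hI1 hI2
      _ = (M₁ * CA + C₀ * CH) * r ^ (n-1) := by ring
  -- the final chain
  have hAsub : ball x₀ r ∩ upperHalfSpace n hn' ∩ {x | u x ≤ θ}
      ⊆ ball x₀ (r+1) ∩ upperHalfSpace n hn' := fun x hx =>
    ⟨ball_subset_ball (by linarith) hx.1.1, hx.1.2⟩
  have hrpow : (0:ℝ) ≤ r ^ (n-1) := by positivity
  calc (∫ x in ball x₀ r ∩ upperHalfSpace n hn' ∩ {x | u x ≤ θ}, min ((u x + 1) ^ p) 1)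
      ≤ ∫ x in ball x₀ r ∩ upperHalfSpace n hn' ∩ {x | u x ≤ θ}, C₀ * F (u x) :=
        setIntegral_mono_on hintA1 hintA2 hAmeas hstep1
    _ ≤ ∫ x in ball x₀ (r+1) ∩ upperHalfSpace n hn', C₀ * F (u x) :=
        setIntegral_mono_set hintSH2 (ae_of_all _ fun x => hFubd1 x)
          (HasSubset.Subset.eventuallyLE hAsub)
    _ = C₀ * ∫ x in ball x₀ (r+1) ∩ upperHalfSpace n hn', F (u x) :=
        integral_const_mul _ _
    _ ≤ C₀ * energyE n hn' p F G (ball x₀ (r+1)) u :=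
        mul_le_mul_of_nonneg_left hEu hC₀0
    _ ≤ C₀ * (Q * energyE n hn' p F G (ball x₀ (r+1)) (fun x => u x + φ x)) :=
        mul_le_mul_of_nonneg_left hminapp hC₀0
    _ ≤ C₀ * (Q * ((M₁ * CA + C₀ * CH) * r ^ (n-1))) :=
        mul_le_mul_of_nonneg_left (mul_le_mul_of_nonneg_left hEv hQ0) hC₀0
    _ = C₀ * Q * (M₁ * CA + C₀ * CH) * r ^ (n-1) := by ring
    _ ≤ (1 + C₀ * Q * (M₁ * CA + C₀ * CH)) * r ^ (n-1) := by nlinarith
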